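/- Let A = A₀ ⊕ A₁ be a superspace with two even bilinear operations [·,·] and ∘ and an even linear map α, and let L(A), with its bracket [−,−] and the even linear map φ defined by φ(a[m]) = α(a)[m] and φ(u[m]) = α(u)[m], be the affinization of A. If (A, [·,·], ∘, α) is a super Hom-Gel'fand-Dorfman bialgebra, then (L(A), [−,−], φ) is a Hom-Lie superalgebra. -/

import Mathlib

noncomputable section

/-- The sign `(-1)^{|x||y|}` attached to parities `i, j` in `ℤ₂`. -/
def sg (i j : ZMod 2) : ℂ := (-1 : ℂ) ^ (i.val * j.val)

variable {A : Type*} [AddCommGroup A] [Module ℂ A]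

/-- `gr` makes `A` into a superspace: `A = A₀ ⊕ A₁`. -/
def IsSupergrading (gr : ZMod 2 → Submodule ℂ A) : Prop :=
  (∀ x : A, ∃ x0 ∈ gr 0, ∃ x1 ∈ gr 1, x = x0 + x1) ∧ (gr 0 ⊓ gr 1 = ⊥)

/-- An even linear map: it preserves the grading. -/
def EvenLin (gr : ZMod 2 → Submodule ℂ A) (α : A →ₗ[ℂ] A) : Prop :=
  ∀ i : ZMod 2, ∀ x ∈ gr i, α x ∈ gr i

/-- An even bilinear map: it adds parities. -/
def EvenBilin (gr : ZMod 2 → Submodule ℂ A) (m : A →ₗ[ℂ] A →ₗ[ℂ] A) : Prop :=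
  ∀ i j : ZMod 2, ∀ x ∈ gr i, ∀ y ∈ gr j, m x y ∈ gr (i + j)

/-- A Hom-Lie superalgebra structure on the superspace `(A, gr)`. -/
def HomLieSuper (gr : ZMod 2 → Submodule ℂ A) (br : A →ₗ[ℂ] A →ₗ[ℂ] A)
    (α : A →ₗ[ℂ] A) : Prop :=
  EvenLin gr α ∧ EvenBilin gr br ∧
  (∀ (i j : ZMod 2), ∀ x ∈ gr i, ∀ y ∈ gr j, br x y = -(sg i j • br y x)) ∧
  (∀ (i j k : ZMod 2), ∀ x ∈ gr i, ∀ y ∈ gr j, ∀ z ∈ gr k,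
    sg i k • br (br x y) (α z) + sg i j • br (br y z) (α x)
      + sg j k • br (br z x) (α y) = 0)

/-- A Hom-Novikov superalgebra structure on the superspace `(A, gr)`. -/
def HomNovikovSuper (gr : ZMod 2 → Submodule ℂ A) (c : A →ₗ[ℂ] A →ₗ[ℂ] A)
    (α : A →ₗ[ℂ] A) : Prop :=
  EvenLin gr α ∧ EvenBilin gr c ∧
  (∀ (i j k : ZMod 2), ∀ x ∈ gr i, ∀ y ∈ gr j, ∀ z ∈ gr k,
    c (c x y) (α z) - c (α x) (c y z) = sg i j • (c (c y x) (α z) - c (α y) (c x z))) ∧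
  (∀ (i j k : ZMod 2), ∀ x ∈ gr i, ∀ y ∈ gr j, ∀ z ∈ gr k,
    c (c x y) (α z) = sg j k • c (c x z) (α y))

/-- A super Hom-Gel'fand-Dorfman bialgebra structure on the superspace `(A, gr)`. -/
def SuperHomGD (gr : ZMod 2 → Submodule ℂ A) (br c : A →ₗ[ℂ] A →ₗ[ℂ] A)
    (α : A →ₗ[ℂ] A) : Prop :=
  HomLieSuper gr br α ∧ HomNovikovSuper gr c α ∧
  (∀ (i j k : ZMod 2), ∀ x ∈ gr i, ∀ y ∈ gr j, ∀ z ∈ gr k,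
    br (c x y) (α z) - sg j k • br (c x z) (α y) + c (br x y) (α z)
      - sg j k • c (br x z) (α y) - c (α x) (br y z) = 0)

/-- A Lie superalgebra structure on the superspace `(A, gr)`. -/
def LieSuper (gr : ZMod 2 → Submodule ℂ A) (br : A →ₗ[ℂ] A →ₗ[ℂ] A) : Prop :=
  EvenBilin gr br ∧
  (∀ (i j : ZMod 2), ∀ x ∈ gr i, ∀ y ∈ gr j, br x y = -(sg i j • br y x)) ∧
  (∀ (i j k : ZMod 2), ∀ x ∈ gr i, ∀ y ∈ gr j, ∀ z ∈ gr k,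
    sg i k • br (br x y) z + sg i j • br (br y z) x + sg j k • br (br z x) y = 0)

/-- A Novikov superalgebra structure on the superspace `(A, gr)`. -/
def NovikovSuper (gr : ZMod 2 → Submodule ℂ A) (c : A →ₗ[ℂ] A →ₗ[ℂ] A) : Prop :=
  EvenBilin gr c ∧
  (∀ (i j k : ZMod 2), ∀ x ∈ gr i, ∀ y ∈ gr j, ∀ z ∈ gr k,
    c (c x y) z - c x (c y z) = sg i j • (c (c y x) z - c y (c x z))) ∧
  (∀ (i j k : ZMod 2), ∀ x ∈ gr i, ∀ y ∈ gr j, ∀ z ∈ gr k,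
    c (c x y) z = sg j k • c (c x z) y)

/-- A super Gel'fand-Dorfman bialgebra structure on the superspace `(A, gr)`. -/
def SuperGD (gr : ZMod 2 → Submodule ℂ A) (br c : A →ₗ[ℂ] A →ₗ[ℂ] A) : Prop :=
  LieSuper gr br ∧ NovikovSuper gr c ∧
  (∀ (i j k : ZMod 2), ∀ x ∈ gr i, ∀ y ∈ gr j, ∀ z ∈ gr k,
    br (c x y) z - sg j k • br (c x z) y + c (br x y) z
      - sg j k • c (br x z) y - c x (br y z) = 0)


/-- The grading induced on `σ →₀ A` by a grading of `A` (coefficientwise). -/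
def grFinsupp {A : Type*} [AddCommGroup A] [Module ℂ A] (σ : Type*)
    (gr : ZMod 2 → Submodule ℂ A) (i : ZMod 2) : Submodule ℂ (σ →₀ A) where
  carrier := {f | ∀ s : σ, f s ∈ gr i}
  add_mem' := by
    intro f g hf hg s
    rw [Finsupp.add_apply]
    exact add_mem (hf s) (hg s)
  zero_mem' := by
    intro s
    rw [Finsupp.zero_apply]
    exact zero_mem _
  smul_mem' := by
    intro t f hf s
    rw [Finsupp.smul_apply]
    exact Submodule.smul_mem _ t (hf s)

/-- The bracket of the affinization `L(A)`, determined on the homogeneous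
generators `a[m] = a ⊗ tᵐ` (for `a ∈ A₀`) and `u[m] = u ⊗ t^{m+1/2}` (for `u ∈ A₁`). -/
def AffBracket {A : Type*} [AddCommGroup A] [Module ℂ A]
    (gr : ZMod 2 → Submodule ℂ A) (br c : A →ₗ[ℂ] A →ₗ[ℂ] A)
    (B : (ℤ →₀ A) →ₗ[ℂ] (ℤ →₀ A) →ₗ[ℂ] (ℤ →₀ A)) : Prop :=
  (∀ (m n : ℤ), ∀ a ∈ gr 0, ∀ b ∈ gr 0,
    B (Finsupp.single m a) (Finsupp.single n b)
      = Finsupp.single (m + n) (br a b)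
        + Finsupp.single (m + n - 1) ((m : ℂ) • c a b - (n : ℂ) • c b a)) ∧
  (∀ (m n : ℤ), ∀ a ∈ gr 0, ∀ u ∈ gr 1,
    B (Finsupp.single m a) (Finsupp.single n u)
      = Finsupp.single (m + n) (br a u)
        + Finsupp.single (m + n - 1)
            ((m : ℂ) • c a u - ((n : ℂ) + (1 / 2 : ℂ)) • c u a)) ∧
  (∀ (m n : ℤ), ∀ u ∈ gr 1, ∀ a ∈ gr 0,
    B (Finsupp.single n u) (Finsupp.single m a)
      = Finsupp.single (m + n) (br u a)
        + Finsupp.single (m + n - 1)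
            (((n : ℂ) + (1 / 2 : ℂ)) • c u a - (m : ℂ) • c a u)) ∧
  (∀ (m n : ℤ), ∀ u ∈ gr 1, ∀ v ∈ gr 1,
    B (Finsupp.single m u) (Finsupp.single n v)
      = Finsupp.single (m + n + 1) (br u v)
        + Finsupp.single (m + n)
            (((m : ℂ) + (1 / 2 : ℂ)) • c u v + ((n : ℂ) + (1 / 2 : ℂ)) • c v u))

-- ===================== auxiliary lemmas =====================

lemma sg00 : sg 0 0 = 1 := by norm_num [sg]
lemma sg01 : sg 0 1 = 1 := by norm_num [sg]
lemma sg10 : sg 1 0 = 1 := by norm_num [sg]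
lemma sg11 : sg 1 1 = -1 := by norm_num [sg, ZMod.val_one]

lemma zmod2_cases (i : ZMod 2) : i = 0 ∨ i = 1 := by fin_cases i <;> [exact Or.inl rfl; exact Or.inr rfl]

lemma single_mem_grFinsupp (gr : ZMod 2 → Submodule ℂ A) {i : ZMod 2} {a : A}
    (m : ℤ) (ha : a ∈ gr i) : Finsupp.single m a ∈ grFinsupp ℤ gr i := by
  intro s
  rw [Finsupp.single_apply]
  split
  · exact ha
  · exact zero_mem _

lemma mem_span_singles (gr : ZMod 2 → Submodule ℂ A) (i : ZMod 2) (f : ℤ →₀ A)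
    (hf : f ∈ grFinsupp ℤ gr i) :
    f ∈ Submodule.span ℂ {g : ℤ →₀ A | ∃ m : ℤ, ∃ a ∈ gr i, g = Finsupp.single m a} := by
  have : f = f.sum (fun s a => Finsupp.single s a) := (Finsupp.sum_single f).symm
  rw [this]
  apply Submodule.sum_mem
  intro s _
  exact Submodule.subset_span ⟨s, f s, hf s, rfl⟩


section keylemmas
variable {A : Type*} [AddCommGroup A] [Module ℂ A]

/-- Degree `d₁` coefficient. -/
def E1expr (br : A →ₗ[ℂ] A →ₗ[ℂ] A) (α : A →ₗ[ℂ] A) (a b e : A) (lam mu nu : ℂ) : A :=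
  lam • br (br a b) (α e) + mu • br (br b e) (α a) + nu • br (br e a) (α b)

/-- Degree `d₂` coefficient. -/
def E2expr (br c : A →ₗ[ℂ] A →ₗ[ℂ] A) (α : A →ₗ[ℂ] A) (a b e : A)
    (lam mu nu M N P : ℂ) : A :=
  (lam*M) • (br (c a b) (α e) - nu • br (c a e) (α b) + c (br a b) (α e)
      + (nu*lam) • c (br e a) (α b) - c (α a) (br b e))
  + (mu*N) • (br (c b e) (α a) - lam • br (c b a) (α e) + c (br b e) (α a)
      + (lam*mu) • c (br a b) (α e) - c (α b) (br e a))
  + (nu*P) • (br (c e a) (α b) - mu • br (c e b) (α a) + c (br e a) (α b)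
      + (mu*nu) • c (br b e) (α a) - c (α e) (br a b))

/-- Degree `d₃` coefficient. -/
def E3expr (c : A →ₗ[ℂ] A →ₗ[ℂ] A) (α : A →ₗ[ℂ] A) (a b e : A)
    (lam mu nu M N P : ℂ) : A :=
  ((M^2-M)*lam) • (c (c a b) (α e) - nu • c (c a e) (α b))
  - ((N^2-N)*mu*lam) • (c (c b a) (α e) - lam • c (c b e) (α a))
  - ((P^2-P)*mu*nu) • (c (c e b) (α a) - mu • c (c e a) (α b))
  + (M*N*lam) • (c (c a b) (α e) - c (α a) (c b e) - mu • (c (c b a) (α e) - c (α b) (c a e)))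
  + (M*P*nu) • (c (c e a) (α b) - c (α e) (c a b) - lam • (c (c a e) (α b) - c (α a) (c e b)))
  + (N*P*mu) • (c (c b e) (α a) - c (α b) (c e a) - nu • (c (c e b) (α a) - c (α e) (c b a)))

lemma keyH2 (br c : A →ₗ[ℂ] A →ₗ[ℂ] A) (α : A →ₗ[ℂ] A) (a b e : A)
    (lam mu nu M N P : ℂ)
    (h1 : br (c a b) (α e) - nu • br (c a e) (α b) + c (br a b) (α e)
        - nu • c (br a e) (α b) - c (α a) (br b e) = 0)
    (h2 : br (c b e) (α a) - lam • br (c b a) (α e) + c (br b e) (α a)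
        - lam • c (br b a) (α e) - c (α b) (br e a) = 0)
    (h3 : br (c e a) (α b) - mu • br (c e b) (α a) + c (br e a) (α b)
        - mu • c (br e b) (α a) - c (α e) (br a b) = 0)
    (l1 : c (br a e) (α b) = -(lam • c (br e a) (α b)))
    (l2 : c (br b a) (α e) = -(mu • c (br a b) (α e)))
    (l3 : c (br e b) (α a) = -(nu • c (br b e) (α a))) :
    E2expr br c α a b e lam mu nu M N P = 0 := by
  unfold E2expr
  linear_combination (norm := module) (lam*M) • h1 + (lam*M*nu) • l1 + (mu*N) • h2
    + (mu*N*lam) • l2 + (nu*P) • h3 + (nu*P*mu) • l3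

lemma keyH3 (c : A →ₗ[ℂ] A →ₗ[ℂ] A) (α : A →ₗ[ℂ] A) (a b e : A)
    (lam mu nu M N P : ℂ)
    (n2a : c (c a b) (α e) = nu • c (c a e) (α b))
    (n2b : c (c b a) (α e) = lam • c (c b e) (α a))
    (n2c : c (c e b) (α a) = mu • c (c e a) (α b))
    (n1a : c (c a b) (α e) - c (α a) (c b e) = mu • (c (c b a) (α e) - c (α b) (c a e)))
    (n1b : c (c e a) (α b) - c (α e) (c a b) = lam • (c (c a e) (α b) - c (α a) (c e b)))
    (n1c : c (c b e) (α a) - c (α b) (c e a) = nu • (c (c e b) (α a) - c (α e) (c b a)))  :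
    E3expr c α a b e lam mu nu M N P = 0 := by
  unfold E3expr
  linear_combination (norm := module) ((M^2-M)*lam) • n2a - ((N^2-N)*mu*lam) • n2b
    - ((P^2-P)*mu*nu) • n2c + (M*N*lam) • n1a + (M*P*nu) • n1b + (N*P*mu) • n1c

end keylemmas

-- ===================== main theorem =====================

set_option maxHeartbeats 1600000 in
/-- If `(A, [·,·], ∘, α)` is a super Hom-Gel'fand-Dorfman bialgebra,
then the affinization `(L(A), [−,−], φ)`, with `φ(x[m]) = α(x)[m]`, is a Hom-Lie
superalgebra. -/
theorem homLieSuper_affinization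
    {A : Type*} [AddCommGroup A] [Module ℂ A]
    (gr : ZMod 2 → Submodule ℂ A) (hgr : IsSupergrading gr)
    (br c : A →ₗ[ℂ] A →ₗ[ℂ] A) (α : A →ₗ[ℂ] A)
    (B : (ℤ →₀ A) →ₗ[ℂ] (ℤ →₀ A) →ₗ[ℂ] (ℤ →₀ A))
    (hB : AffBracket gr br c B)
    (hGD : SuperHomGD gr br c α) :
    HomLieSuper (grFinsupp ℤ gr) B (Finsupp.mapRange.linearMap α) := by
  obtain ⟨⟨hLa, hLb, hLsk, hLjac⟩, ⟨hNa, hNb, hN1, hN2⟩, hC⟩ := hGD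
  obtain ⟨hB1, hB2, hB3, hB4⟩ := hB
  have e00 : (0 : ZMod 2) + 0 = 0 := by decide
  have e01 : (0 : ZMod 2) + 1 = 1 := by decide
  have e10 : (1 : ZMod 2) + 0 = 1 := by decide
  have e11 : (1 : ZMod 2) + 1 = 0 := by decide
  refine ⟨?_, ?_, ?_, ?_⟩
  · -- EvenLin φ
    intro i f hf s
    simp only [Finsupp.mapRange.linearMap_apply, Finsupp.mapRange_apply]
    exact hLa i (f s) (hf s)
  · -- EvenBilin B
    intro i j x hx y hy
    have hx' := mem_span_singles gr i x hx
    clear hx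
    induction hx' using Submodule.span_induction with
    | zero => simp only [map_zero, LinearMap.zero_apply]; exact zero_mem _
    | add u v _ _ hu hv =>
      rw [map_add, LinearMap.add_apply]; exact add_mem hu hv
    | smul t u _ hu =>
      rw [map_smul, LinearMap.smul_apply]; exact Submodule.smul_mem _ t hu
    | mem g hg =>
      obtain ⟨m, a, ha, rfl⟩ := hg
      have hy' := mem_span_singles gr j y hy
      clear hy
      induction hy' using Submodule.span_induction with
      | zero => rw [map_zero]; exact zero_mem _
      | add u v _ _ hu hv => rw [map_add]; exact add_mem hu hv
      | smul t u _ hu => rw [map_smul]; exact Submodule.smul_mem _ t hu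
      | mem g hg =>
        obtain ⟨n, b, hb, rfl⟩ := hg
        rcases zmod2_cases i with rfl | rfl <;> rcases zmod2_cases j with rfl | rfl
        · rw [hB1 m n a ha b hb]
          refine add_mem (single_mem_grFinsupp gr _ ?_) (single_mem_grFinsupp gr _ ?_)
          · exact hLb 0 0 a ha b hb
          · exact sub_mem (Submodule.smul_mem _ _ (hNb 0 0 a ha b hb))
              (Submodule.smul_mem _ _ (hNb 0 0 b hb a ha))
        · rw [hB2 m n a ha b hb]
          refine add_mem (single_mem_grFinsupp gr _ ?_) (single_mem_grFinsupp gr _ ?_)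
          · exact hLb 0 1 a ha b hb
          · refine sub_mem (Submodule.smul_mem _ _ (hNb 0 1 a ha b hb))
              (Submodule.smul_mem _ _ ?_)
            have := hNb 1 0 b hb a ha; rwa [e10, ← e01] at this
        · rw [hB3 n m a ha b hb]
          refine add_mem (single_mem_grFinsupp gr _ ?_) (single_mem_grFinsupp gr _ ?_)
          · exact hLb 1 0 a ha b hb
          · refine sub_mem (Submodule.smul_mem _ _ (hNb 1 0 a ha b hb))
              (Submodule.smul_mem _ _ ?_)
            have := hNb 0 1 b hb a ha; rwa [e01, ← e10] at this
        · rw [hB4 m n a ha b hb]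
          refine add_mem (single_mem_grFinsupp gr _ ?_) (single_mem_grFinsupp gr _ ?_)
          · exact hLb 1 1 a ha b hb
          · exact add_mem (Submodule.smul_mem _ _ (hNb 1 1 a ha b hb))
              (Submodule.smul_mem _ _ (hNb 1 1 b hb a ha))
  · -- skew symmetry
    intro i j x hx y hy
    have hx' := mem_span_singles gr i x hx
    clear hx
    induction hx' using Submodule.span_induction with
    | zero => simp
    | add u v _ _ hu hv =>
      simp only [map_add, LinearMap.add_apply, smul_add]
      linear_combination (norm := module) hu + hv
    | smul t u _ hu =>
      simp only [map_smul, LinearMap.smul_apply]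
      linear_combination (norm := module) t • hu
    | mem g hg =>
      obtain ⟨m, a, ha, rfl⟩ := hg
      have hy' := mem_span_singles gr j y hy
      clear hy
      induction hy' using Submodule.span_induction with
      | zero => simp
      | add u v _ _ hu hv =>
        simp only [map_add, LinearMap.add_apply, smul_add]
        linear_combination (norm := module) hu + hv
      | smul t u _ hu =>
        simp only [map_smul, LinearMap.smul_apply]
        linear_combination (norm := module) t • hu
      | mem g hg =>
        obtain ⟨n, b, hb, rfl⟩ := hg
        rcases zmod2_cases i with rfl | rfl <;> rcases zmod2_cases j with rfl | rfl
        · rw [hB1 m n a ha b hb, hB1 n m b hb a ha, sg00,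
            show n+m = m+n from by ring]
          have s := hLsk 0 0 a ha b hb; rw [sg00, one_smul] at s
          rw [s]
          simp only [Finsupp.single_neg, Finsupp.single_sub, ← Finsupp.smul_single]
          module
        · rw [hB2 m n a ha b hb, hB3 m n b hb a ha, sg01]
          have s := hLsk 0 1 a ha b hb; rw [sg01, one_smul] at s
          rw [s]
          simp only [Finsupp.single_neg, Finsupp.single_sub, ← Finsupp.smul_single]
          module
        · rw [hB3 n m a ha b hb, hB2 n m b hb a ha, sg10]
          have s := hLsk 1 0 a ha b hb; rw [sg10, one_smul] at s
          rw [s]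
          simp only [Finsupp.single_neg, Finsupp.single_sub, ← Finsupp.smul_single]
          module
        · rw [hB4 m n a ha b hb, hB4 n m b hb a ha, sg11,
            show n+m+1 = m+n+1 from by ring, show n+m = m+n from by ring]
          have s := hLsk 1 1 a ha b hb; rw [sg11] at s
          rw [s]
          simp only [Finsupp.single_neg, Finsupp.single_add, ← Finsupp.smul_single]
          module
  · -- Jacobi identity
    intro i j k x hx y hy z hz
    have hx' := mem_span_singles gr i x hx
    clear hx
    induction hx' using Submodule.span_induction with
    | zero => simp
    | add u v _ _ hu hv =>
      simp only [map_add, LinearMap.add_apply, smul_add]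
      linear_combination (norm := module) hu + hv
    | smul t u _ hu =>
      simp only [map_smul, LinearMap.smul_apply]
      linear_combination (norm := module) t • hu
    | mem gx hgx =>
    obtain ⟨m, a, ha, rfl⟩ := hgx
    have hy' := mem_span_singles gr j y hy
    clear hy
    induction hy' using Submodule.span_induction with
    | zero => simp
    | add u v _ _ hu hv =>
      simp only [map_add, LinearMap.add_apply, smul_add]
      linear_combination (norm := module) hu + hv
    | smul t u _ hu =>
      simp only [map_smul, LinearMap.smul_apply]
      linear_combination (norm := module) t • hu
    | mem gy hgy =>
    obtain ⟨n, b, hb, rfl⟩ := hgy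
    have hz' := mem_span_singles gr k z hz
    clear hz
    induction hz' using Submodule.span_induction with
    | zero => simp
    | add u v _ _ hu hv =>
      simp only [map_add, LinearMap.add_apply, smul_add]
      linear_combination (norm := module) hu + hv
    | smul t u _ hu =>
      simp only [map_smul, LinearMap.smul_apply]
      linear_combination (norm := module) t • hu
    | mem gz hgz =>
    obtain ⟨p, e, he, rfl⟩ := hgz
    simp only [Finsupp.mapRange.linearMap_apply, Finsupp.mapRange_single]
    have hαa := hLa i a ha
    have hαb := hLa j b hb
    have hαe := hLa k e he
    rcases zmod2_cases i with rfl | rfl <;> rcases zmod2_cases j with rfl | rfl <;>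
      rcases zmod2_cases k with rfl | rfl
    · -- case (0,0,0)
      have hab : br a b ∈ gr 0 := e00 ▸ hLb 0 0 a ha b hb
      have hbe : br b e ∈ gr 0 := e00 ▸ hLb 0 0 b hb e he
      have hea : br e a ∈ gr 0 := e00 ▸ hLb 0 0 e he a ha
      have hcab : c a b ∈ gr 0 := e00 ▸ hNb 0 0 a ha b hb
      have hcba : c b a ∈ gr 0 := e00 ▸ hNb 0 0 b hb a ha
      have hcbe : c b e ∈ gr 0 := e00 ▸ hNb 0 0 b hb e he
      have hceb : c e b ∈ gr 0 := e00 ▸ hNb 0 0 e he b hb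
      have hcea : c e a ∈ gr 0 := e00 ▸ hNb 0 0 e he a ha
      have hcae : c a e ∈ gr 0 := e00 ▸ hNb 0 0 a ha e he
      rw [sg00, hB1 m n a ha b hb, hB1 n p b hb e he, hB1 p m e he a ha]
      simp only [Finsupp.single_sub, ← Finsupp.smul_single, map_add, map_sub, map_smul,
        LinearMap.add_apply, LinearMap.sub_apply, LinearMap.smul_apply]
      rw [hB1 (m+n) p (br a b) hab (α e) hαe,
          hB1 (m+n-1) p (c a b) hcab (α e) hαe,
          hB1 (m+n-1) p (c b a) hcba (α e) hαe,
          hB1 (n+p) m (br b e) hbe (α a) hαa,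
          hB1 (n+p-1) m (c b e) hcbe (α a) hαa,
          hB1 (n+p-1) m (c e b) hceb (α a) hαa,
          hB1 (p+m) n (br e a) hea (α b) hαb,
          hB1 (p+m-1) n (c e a) hcea (α b) hαb,
          hB1 (p+m-1) n (c a e) hcae (α b) hαb]
      have H1 : br (br a b) (α e) + br (br b e) (α a) + br (br e a) (α b) = 0 := by
        have h := hLjac 0 0 0 a ha b hb e he
        simp only [sg00, one_smul] at h
        linear_combination (norm := module) h
      have s1 : br a e = -(br e a) := by
        have := hLsk 0 0 a ha e he; rwa [sg00, one_smul] at this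
      have s2 : br b a = -(br a b) := by
        have := hLsk 0 0 b hb a ha; rwa [sg00, one_smul] at this
      have s3 : br e b = -(br b e) := by
        have := hLsk 0 0 e he b hb; rwa [sg00, one_smul] at this
      have l1 : c (br a e) (α b) = -(c (br e a) (α b)) := by
        rw [s1, map_neg, LinearMap.neg_apply]
      have l2 : c (br b a) (α e) = -(c (br a b) (α e)) := by
        rw [s2, map_neg, LinearMap.neg_apply]
      have l3 : c (br e b) (α a) = -(c (br b e) (α a)) := by
        rw [s3, map_neg, LinearMap.neg_apply]
      have H2 : (m:ℂ) • (br (c a b) (α e) - br (c a e) (α b) + c (br a b) (α e)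
            + c (br e a) (α b) - c (α a) (br b e))
          + (n:ℂ) • (br (c b e) (α a) - br (c b a) (α e) + c (br b e) (α a)
            + c (br a b) (α e) - c (α b) (br e a))
          + (p:ℂ) • (br (c e a) (α b) - br (c e b) (α a) + c (br e a) (α b)
            + c (br b e) (α a) - c (α e) (br a b)) = 0 := by
        have h1 := hC 0 0 0 a ha b hb e he
        have h2 := hC 0 0 0 b hb e he a ha
        have h3 := hC 0 0 0 e he a ha b hb
        simp only [sg00, one_smul] at h1 h2 h3
        linear_combination (norm := module) (m:ℂ) • h1 + (m:ℂ) • l1 + (n:ℂ) • h2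
          + (n:ℂ) • l2 + (p:ℂ) • h3 + (p:ℂ) • l3
      have H3 : ((m:ℂ)^2 - m) • (c (c a b) (α e) - c (c a e) (α b))
          - ((n:ℂ)^2 - n) • (c (c b a) (α e) - c (c b e) (α a))
          - ((p:ℂ)^2 - p) • (c (c e b) (α a) - c (c e a) (α b))
          + ((m:ℂ)*n) • (c (c a b) (α e) - c (α a) (c b e)
              - (c (c b a) (α e) - c (α b) (c a e)))
          + ((m:ℂ)*p) • (c (c e a) (α b) - c (α e) (c a b)
              - (c (c a e) (α b) - c (α a) (c e b)))
          + ((n:ℂ)*p) • (c (c b e) (α a) - c (α b) (c e a)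
              - (c (c e b) (α a) - c (α e) (c b a))) = 0 := by
        have n2a := hN2 0 0 0 a ha b hb e he
        have n2b := hN2 0 0 0 b hb a ha e he
        have n2c := hN2 0 0 0 e he b hb a ha
        have n1a := hN1 0 0 0 a ha b hb e he
        have n1b := hN1 0 0 0 e he a ha b hb
        have n1c := hN1 0 0 0 b hb e he a ha
        simp only [sg00, one_smul] at n2a n2b n2c n1a n1b n1c
        linear_combination (norm := module) ((m:ℂ)^2 - m) • n2a - ((n:ℂ)^2 - n) • n2b
          - ((p:ℂ)^2 - p) • n2c + ((m:ℂ)*n) • n1a + ((m:ℂ)*p) • n1b + ((n:ℂ)*p) • n1c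
      trans (Finsupp.single (m+n+p)
          (br (br a b) (α e) + br (br b e) (α a) + br (br e a) (α b))
        + Finsupp.single (m+n+p-1)
          ((m:ℂ) • (br (c a b) (α e) - br (c a e) (α b) + c (br a b) (α e)
            + c (br e a) (α b) - c (α a) (br b e))
          + (n:ℂ) • (br (c b e) (α a) - br (c b a) (α e) + c (br b e) (α a)
            + c (br a b) (α e) - c (α b) (br e a))
          + (p:ℂ) • (br (c e a) (α b) - br (c e b) (α a) + c (br e a) (α b)
            + c (br b e) (α a) - c (α e) (br a b)))
        + Finsupp.single (m+n+p-2)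
          (((m:ℂ)^2 - m) • (c (c a b) (α e) - c (c a e) (α b))
          - ((n:ℂ)^2 - n) • (c (c b a) (α e) - c (c b e) (α a))
          - ((p:ℂ)^2 - p) • (c (c e b) (α a) - c (c e a) (α b))
          + ((m:ℂ)*n) • (c (c a b) (α e) - c (α a) (c b e)
              - (c (c b a) (α e) - c (α b) (c a e)))
          + ((m:ℂ)*p) • (c (c e a) (α b) - c (α e) (c a b)
              - (c (c a e) (α b) - c (α a) (c e b)))
          + ((n:ℂ)*p) • (c (c b e) (α a) - c (α b) (c e a)
              - (c (c e b) (α a) - c (α e) (c b a)))))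
      · rw [show m+n-1+p = m+n+p-1 from by ring, show n+p+m = m+n+p from by ring,
          show n+p-1+m = m+n+p-1 from by ring, show p+m+n = m+n+p from by ring,
          show p+m-1+n = m+n+p-1 from by ring]
        rw [show m+n+p-1-1 = m+n+p-2 from by ring]
        simp only [Finsupp.single_neg, Finsupp.single_sub, Finsupp.single_add,
          ← Finsupp.smul_single, smul_add, smul_sub, smul_neg, smul_smul, one_smul]
        match_scalars <;> ring
      · rw [H1, H2, H3]
        simp
    · -- case (0,0,1)
      have hab : br a b ∈ gr 0 := e00 ▸ hLb 0 0 a ha b hb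
      have hbe : br b e ∈ gr 1 := e01 ▸ hLb 0 1 b hb e he
      have hea : br e a ∈ gr 1 := e10 ▸ hLb 1 0 e he a ha
      have hcab : c a b ∈ gr 0 := e00 ▸ hNb 0 0 a ha b hb
      have hcba : c b a ∈ gr 0 := e00 ▸ hNb 0 0 b hb a ha
      have hcbe : c b e ∈ gr 1 := e01 ▸ hNb 0 1 b hb e he
      have hceb : c e b ∈ gr 1 := e10 ▸ hNb 1 0 e he b hb
      have hcea : c e a ∈ gr 1 := e10 ▸ hNb 1 0 e he a ha
      have hcae : c a e ∈ gr 1 := e01 ▸ hNb 0 1 a ha e he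
      simp only [sg00, sg01, sg10, sg11]
      rw [hB1 m n a ha b hb, hB2 n p b hb e he, hB3 m p e he a ha]
      simp only [Finsupp.single_sub, Finsupp.single_add, ← Finsupp.smul_single,
        map_add, map_sub, map_smul, LinearMap.add_apply, LinearMap.sub_apply,
        LinearMap.smul_apply]
      rw [hB2 (m+n) p (br a b) hab (α e) hαe,
        hB2 (m+n-1) p (c a b) hcab (α e) hαe,
        hB2 (m+n-1) p (c b a) hcba (α e) hαe,
        hB3 m (n+p) (br b e) hbe (α a) hαa,
        hB3 m (n+p-1) (c b e) hcbe (α a) hαa,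
        hB3 m (n+p-1) (c e b) hceb (α a) hαa,
        hB3 n (m+p) (br e a) hea (α b) hαb,
        hB3 n (m+p-1) (c e a) hcea (α b) hαb,
        hB3 n (m+p-1) (c a e) hcae (α b) hαb]
      have H1 : E1expr br α a b e 1 1 1 = 0 := by
        have h := hLjac 0 0 1 a ha b hb e he
        simp only [sg00, sg01, sg10, sg11] at h
        exact h
      have s1 := hLsk 0 1 a ha e he
      have s2 := hLsk 0 0 b hb a ha
      have s3 := hLsk 1 0 e he b hb
      simp only [sg00, sg01, sg10, sg11] at s1 s2 s3
      have l1 : c (br a e) (α b) = -((1:ℂ) • c (br e a) (α b)) := by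
        rw [s1]; simp only [map_neg, map_smul, LinearMap.neg_apply, LinearMap.smul_apply]
      have l2 : c (br b a) (α e) = -((1:ℂ) • c (br a b) (α e)) := by
        rw [s2]; simp only [map_neg, map_smul, LinearMap.neg_apply, LinearMap.smul_apply]
      have l3 : c (br e b) (α a) = -((1:ℂ) • c (br b e) (α a)) := by
        rw [s3]; simp only [map_neg, map_smul, LinearMap.neg_apply, LinearMap.smul_apply]
      have h1 := hC 0 0 1 a ha b hb e he
      have h2 := hC 0 1 0 b hb e he a ha
      have h3 := hC 1 0 0 e he a ha b hb
      simp only [sg00, sg01, sg10, sg11] at h1 h2 h3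
      have H2 : E2expr br c α a b e 1 1 1 (m:ℂ) (n:ℂ) ((p:ℂ)+1/2) = 0 :=
        keyH2 br c α a b e _ _ _ _ _ _ h1 h2 h3 l1 l2 l3
      have n2a := hN2 0 0 1 a ha b hb e he
      have n2b := hN2 0 0 1 b hb a ha e he
      have n2c := hN2 1 0 0 e he b hb a ha
      have n1a := hN1 0 0 1 a ha b hb e he
      have n1b := hN1 1 0 0 e he a ha b hb
      have n1c := hN1 0 1 0 b hb e he a ha
      simp only [sg00, sg01, sg10, sg11] at n2a n2b n2c n1a n1b n1c
      have H3 : E3expr c α a b e 1 1 1 (m:ℂ) (n:ℂ) ((p:ℂ)+1/2) = 0 :=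
        keyH3 c α a b e _ _ _ _ _ _ n2a n2b n2c n1a n1b n1c
      trans (Finsupp.single (m+n+p) (E1expr br α a b e 1 1 1)
        + Finsupp.single (m+n+p-1) (E2expr br c α a b e 1 1 1 (m:ℂ) (n:ℂ) ((p:ℂ)+1/2))
        + Finsupp.single (m+n+p-2) (E3expr c α a b e 1 1 1 (m:ℂ) (n:ℂ) ((p:ℂ)+1/2)))
      · rw [show m+n-1+p = m+n+p-1 from by ring,
          show m+(n+p) = m+n+p from by ring,
          show m+(n+p-1) = m+n+p-1 from by ring,
          show n+(m+p) = m+n+p from by ring,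
          show n+(m+p-1) = m+n+p-1 from by ring,
          show m+n+p-1-1 = m+n+p-2 from by ring]
        simp only [E1expr, E2expr, E3expr, Finsupp.single_neg, Finsupp.single_sub,
          Finsupp.single_add, ← Finsupp.smul_single, smul_add, smul_sub, smul_neg,
          smul_smul, one_smul]
        match_scalars <;> ring
      · rw [H1, H2, H3]
        simp
    · -- case (0,1,0)
      have hab : br a b ∈ gr 1 := e01 ▸ hLb 0 1 a ha b hb
      have hbe : br b e ∈ gr 1 := e10 ▸ hLb 1 0 b hb e he
      have hea : br e a ∈ gr 0 := e00 ▸ hLb 0 0 e he a ha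
      have hcab : c a b ∈ gr 1 := e01 ▸ hNb 0 1 a ha b hb
      have hcba : c b a ∈ gr 1 := e10 ▸ hNb 1 0 b hb a ha
      have hcbe : c b e ∈ gr 1 := e10 ▸ hNb 1 0 b hb e he
      have hceb : c e b ∈ gr 1 := e01 ▸ hNb 0 1 e he b hb
      have hcea : c e a ∈ gr 0 := e00 ▸ hNb 0 0 e he a ha
      have hcae : c a e ∈ gr 0 := e00 ▸ hNb 0 0 a ha e he
      simp only [sg00, sg01, sg10, sg11]
      rw [hB2 m n a ha b hb, hB3 p n b hb e he, hB1 p m e he a ha]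
      simp only [Finsupp.single_sub, Finsupp.single_add, ← Finsupp.smul_single,
        map_add, map_sub, map_smul, LinearMap.add_apply, LinearMap.sub_apply,
        LinearMap.smul_apply]
      rw [hB3 p (m+n) (br a b) hab (α e) hαe,
        hB3 p (m+n-1) (c a b) hcab (α e) hαe,
        hB3 p (m+n-1) (c b a) hcba (α e) hαe,
        hB3 m (p+n) (br b e) hbe (α a) hαa,
        hB3 m (p+n-1) (c b e) hcbe (α a) hαa,
        hB3 m (p+n-1) (c e b) hceb (α a) hαa,
        hB2 (p+m) n (br e a) hea (α b) hαb,
        hB2 (p+m-1) n (c e a) hcea (α b) hαb,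
        hB2 (p+m-1) n (c a e) hcae (α b) hαb]
      have H1 : E1expr br α a b e 1 1 1 = 0 := by
        have h := hLjac 0 1 0 a ha b hb e he
        simp only [sg00, sg01, sg10, sg11] at h
        exact h
      have s1 := hLsk 0 0 a ha e he
      have s2 := hLsk 1 0 b hb a ha
      have s3 := hLsk 0 1 e he b hb
      simp only [sg00, sg01, sg10, sg11] at s1 s2 s3
      have l1 : c (br a e) (α b) = -((1:ℂ) • c (br e a) (α b)) := by
        rw [s1]; simp only [map_neg, map_smul, LinearMap.neg_apply, LinearMap.smul_apply]
      have l2 : c (br b a) (α e) = -((1:ℂ) • c (br a b) (α e)) := by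
        rw [s2]; simp only [map_neg, map_smul, LinearMap.neg_apply, LinearMap.smul_apply]
      have l3 : c (br e b) (α a) = -((1:ℂ) • c (br b e) (α a)) := by
        rw [s3]; simp only [map_neg, map_smul, LinearMap.neg_apply, LinearMap.smul_apply]
      have h1 := hC 0 1 0 a ha b hb e he
      have h2 := hC 1 0 0 b hb e he a ha
      have h3 := hC 0 0 1 e he a ha b hb
      simp only [sg00, sg01, sg10, sg11] at h1 h2 h3
      have H2 : E2expr br c α a b e 1 1 1 (m:ℂ) ((n:ℂ)+1/2) (p:ℂ) = 0 :=
        keyH2 br c α a b e _ _ _ _ _ _ h1 h2 h3 l1 l2 l3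
      have n2a := hN2 0 1 0 a ha b hb e he
      have n2b := hN2 1 0 0 b hb a ha e he
      have n2c := hN2 0 1 0 e he b hb a ha
      have n1a := hN1 0 1 0 a ha b hb e he
      have n1b := hN1 0 0 1 e he a ha b hb
      have n1c := hN1 1 0 0 b hb e he a ha
      simp only [sg00, sg01, sg10, sg11] at n2a n2b n2c n1a n1b n1c
      have H3 : E3expr c α a b e 1 1 1 (m:ℂ) ((n:ℂ)+1/2) (p:ℂ) = 0 :=
        keyH3 c α a b e _ _ _ _ _ _ n2a n2b n2c n1a n1b n1c
      trans (Finsupp.single (m+n+p) (E1expr br α a b e 1 1 1)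
        + Finsupp.single (m+n+p-1) (E2expr br c α a b e 1 1 1 (m:ℂ) ((n:ℂ)+1/2) (p:ℂ))
        + Finsupp.single (m+n+p-2) (E3expr c α a b e 1 1 1 (m:ℂ) ((n:ℂ)+1/2) (p:ℂ)))
      · rw [show p+(m+n) = m+n+p from by ring,
          show p+(m+n-1) = m+n+p-1 from by ring,
          show m+(p+n) = m+n+p from by ring,
          show m+(p+n-1) = m+n+p-1 from by ring,
          show p+m+n = m+n+p from by ring,
          show p+m-1+n = m+n+p-1 from by ring,
          show m+n+p-1-1 = m+n+p-2 from by ring]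
        simp only [E1expr, E2expr, E3expr, Finsupp.single_neg, Finsupp.single_sub,
          Finsupp.single_add, ← Finsupp.smul_single, smul_add, smul_sub, smul_neg,
          smul_smul, one_smul]
        match_scalars <;> ring
      · rw [H1, H2, H3]
        simp
    · -- case (0,1,1)
      have hab : br a b ∈ gr 1 := e01 ▸ hLb 0 1 a ha b hb
      have hbe : br b e ∈ gr 0 := e11 ▸ hLb 1 1 b hb e he
      have hea : br e a ∈ gr 1 := e10 ▸ hLb 1 0 e he a ha
      have hcab : c a b ∈ gr 1 := e01 ▸ hNb 0 1 a ha b hb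
      have hcba : c b a ∈ gr 1 := e10 ▸ hNb 1 0 b hb a ha
      have hcbe : c b e ∈ gr 0 := e11 ▸ hNb 1 1 b hb e he
      have hceb : c e b ∈ gr 0 := e11 ▸ hNb 1 1 e he b hb
      have hcea : c e a ∈ gr 1 := e10 ▸ hNb 1 0 e he a ha
      have hcae : c a e ∈ gr 1 := e01 ▸ hNb 0 1 a ha e he
      simp only [sg00, sg01, sg10, sg11]
      rw [hB2 m n a ha b hb, hB4 n p b hb e he, hB3 m p e he a ha]
      simp only [Finsupp.single_sub, Finsupp.single_add, ← Finsupp.smul_single,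
        map_add, map_sub, map_smul, LinearMap.add_apply, LinearMap.sub_apply,
        LinearMap.smul_apply]
      rw [hB4 (m+n) p (br a b) hab (α e) hαe,
        hB4 (m+n-1) p (c a b) hcab (α e) hαe,
        hB4 (m+n-1) p (c b a) hcba (α e) hαe,
        hB1 (n+p+1) m (br b e) hbe (α a) hαa,
        hB1 (n+p) m (c b e) hcbe (α a) hαa,
        hB1 (n+p) m (c e b) hceb (α a) hαa,
        hB4 (m+p) n (br e a) hea (α b) hαb,
        hB4 (m+p-1) n (c e a) hcea (α b) hαb,
        hB4 (m+p-1) n (c a e) hcae (α b) hαb]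
      have H1 : E1expr br α a b e 1 1 (-1) = 0 := by
        have h := hLjac 0 1 1 a ha b hb e he
        simp only [sg00, sg01, sg10, sg11] at h
        exact h
      have s1 := hLsk 0 1 a ha e he
      have s2 := hLsk 1 0 b hb a ha
      have s3 := hLsk 1 1 e he b hb
      simp only [sg00, sg01, sg10, sg11] at s1 s2 s3
      have l1 : c (br a e) (α b) = -((1:ℂ) • c (br e a) (α b)) := by
        rw [s1]; simp only [map_neg, map_smul, LinearMap.neg_apply, LinearMap.smul_apply]
      have l2 : c (br b a) (α e) = -((1:ℂ) • c (br a b) (α e)) := by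
        rw [s2]; simp only [map_neg, map_smul, LinearMap.neg_apply, LinearMap.smul_apply]
      have l3 : c (br e b) (α a) = -(((-1):ℂ) • c (br b e) (α a)) := by
        rw [s3]; simp only [map_neg, map_smul, LinearMap.neg_apply, LinearMap.smul_apply]
      have h1 := hC 0 1 1 a ha b hb e he
      have h2 := hC 1 1 0 b hb e he a ha
      have h3 := hC 1 0 1 e he a ha b hb
      simp only [sg00, sg01, sg10, sg11] at h1 h2 h3
      have H2 : E2expr br c α a b e 1 1 (-1) (m:ℂ) ((n:ℂ)+1/2) ((p:ℂ)+1/2) = 0 :=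
        keyH2 br c α a b e _ _ _ _ _ _ h1 h2 h3 l1 l2 l3
      have n2a := hN2 0 1 1 a ha b hb e he
      have n2b := hN2 1 0 1 b hb a ha e he
      have n2c := hN2 1 1 0 e he b hb a ha
      have n1a := hN1 0 1 1 a ha b hb e he
      have n1b := hN1 1 0 1 e he a ha b hb
      have n1c := hN1 1 1 0 b hb e he a ha
      simp only [sg00, sg01, sg10, sg11] at n2a n2b n2c n1a n1b n1c
      have H3 : E3expr c α a b e 1 1 (-1) (m:ℂ) ((n:ℂ)+1/2) ((p:ℂ)+1/2) = 0 :=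
        keyH3 c α a b e _ _ _ _ _ _ n2a n2b n2c n1a n1b n1c
      trans (Finsupp.single (m+n+p+1) (E1expr br α a b e 1 1 (-1))
        + Finsupp.single (m+n+p) (E2expr br c α a b e 1 1 (-1) (m:ℂ) ((n:ℂ)+1/2) ((p:ℂ)+1/2))
        + Finsupp.single (m+n+p-1) (E3expr c α a b e 1 1 (-1) (m:ℂ) ((n:ℂ)+1/2) ((p:ℂ)+1/2)))
      · rw [show m+n-1+p+1 = m+n+p from by ring,
          show m+n-1+p = m+n+p-1 from by ring,
          show n+p+1+m = m+n+p+1 from by ring,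
          show n+p+m = m+n+p from by ring,
          show m+p-1+n+1 = m+n+p from by ring,
          show m+p-1+n = m+n+p-1 from by ring,
          show m+p+n+1 = m+n+p+1 from by ring,
          show m+p+n = m+n+p from by ring,
          show m+n+p+1-1 = m+n+p from by ring]
        simp only [E1expr, E2expr, E3expr, Finsupp.single_neg, Finsupp.single_sub,
          Finsupp.single_add, ← Finsupp.smul_single, smul_add, smul_sub, smul_neg,
          smul_smul, one_smul]
        match_scalars <;> ring
      · rw [H1, H2, H3]
        simp
    · -- case (1,0,0)
      have hab : br a b ∈ gr 1 := e10 ▸ hLb 1 0 a ha b hb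
      have hbe : br b e ∈ gr 0 := e00 ▸ hLb 0 0 b hb e he
      have hea : br e a ∈ gr 1 := e01 ▸ hLb 0 1 e he a ha
      have hcab : c a b ∈ gr 1 := e10 ▸ hNb 1 0 a ha b hb
      have hcba : c b a ∈ gr 1 := e01 ▸ hNb 0 1 b hb a ha
      have hcbe : c b e ∈ gr 0 := e00 ▸ hNb 0 0 b hb e he
      have hceb : c e b ∈ gr 0 := e00 ▸ hNb 0 0 e he b hb
      have hcea : c e a ∈ gr 1 := e01 ▸ hNb 0 1 e he a ha
      have hcae : c a e ∈ gr 1 := e10 ▸ hNb 1 0 a ha e he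
      simp only [sg00, sg01, sg10, sg11]
      rw [hB3 n m a ha b hb, hB1 n p b hb e he, hB2 p m e he a ha]
      simp only [Finsupp.single_sub, Finsupp.single_add, ← Finsupp.smul_single,
        map_add, map_sub, map_smul, LinearMap.add_apply, LinearMap.sub_apply,
        LinearMap.smul_apply]
      rw [hB3 p (n+m) (br a b) hab (α e) hαe,
        hB3 p (n+m-1) (c a b) hcab (α e) hαe,
        hB3 p (n+m-1) (c b a) hcba (α e) hαe,
        hB2 (n+p) m (br b e) hbe (α a) hαa,
        hB2 (n+p-1) m (c b e) hcbe (α a) hαa,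
        hB2 (n+p-1) m (c e b) hceb (α a) hαa,
        hB3 n (p+m) (br e a) hea (α b) hαb,
        hB3 n (p+m-1) (c e a) hcea (α b) hαb,
        hB3 n (p+m-1) (c a e) hcae (α b) hαb]
      have H1 : E1expr br α a b e 1 1 1 = 0 := by
        have h := hLjac 1 0 0 a ha b hb e he
        simp only [sg00, sg01, sg10, sg11] at h
        exact h
      have s1 := hLsk 1 0 a ha e he
      have s2 := hLsk 0 1 b hb a ha
      have s3 := hLsk 0 0 e he b hb
      simp only [sg00, sg01, sg10, sg11] at s1 s2 s3
      have l1 : c (br a e) (α b) = -((1:ℂ) • c (br e a) (α b)) := by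
        rw [s1]; simp only [map_neg, map_smul, LinearMap.neg_apply, LinearMap.smul_apply]
      have l2 : c (br b a) (α e) = -((1:ℂ) • c (br a b) (α e)) := by
        rw [s2]; simp only [map_neg, map_smul, LinearMap.neg_apply, LinearMap.smul_apply]
      have l3 : c (br e b) (α a) = -((1:ℂ) • c (br b e) (α a)) := by
        rw [s3]; simp only [map_neg, map_smul, LinearMap.neg_apply, LinearMap.smul_apply]
      have h1 := hC 1 0 0 a ha b hb e he
      have h2 := hC 0 0 1 b hb e he a ha
      have h3 := hC 0 1 0 e he a ha b hb
      simp only [sg00, sg01, sg10, sg11] at h1 h2 h3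
      have H2 : E2expr br c α a b e 1 1 1 ((m:ℂ)+1/2) (n:ℂ) (p:ℂ) = 0 :=
        keyH2 br c α a b e _ _ _ _ _ _ h1 h2 h3 l1 l2 l3
      have n2a := hN2 1 0 0 a ha b hb e he
      have n2b := hN2 0 1 0 b hb a ha e he
      have n2c := hN2 0 0 1 e he b hb a ha
      have n1a := hN1 1 0 0 a ha b hb e he
      have n1b := hN1 0 1 0 e he a ha b hb
      have n1c := hN1 0 0 1 b hb e he a ha
      simp only [sg00, sg01, sg10, sg11] at n2a n2b n2c n1a n1b n1c
      have H3 : E3expr c α a b e 1 1 1 ((m:ℂ)+1/2) (n:ℂ) (p:ℂ) = 0 :=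
        keyH3 c α a b e _ _ _ _ _ _ n2a n2b n2c n1a n1b n1c
      trans (Finsupp.single (m+n+p) (E1expr br α a b e 1 1 1)
        + Finsupp.single (m+n+p-1) (E2expr br c α a b e 1 1 1 ((m:ℂ)+1/2) (n:ℂ) (p:ℂ))
        + Finsupp.single (m+n+p-2) (E3expr c α a b e 1 1 1 ((m:ℂ)+1/2) (n:ℂ) (p:ℂ)))
      · rw [show p+(n+m) = m+n+p from by ring,
          show p+(n+m-1) = m+n+p-1 from by ring,
          show n+p+m = m+n+p from by ring,
          show n+p-1+m = m+n+p-1 from by ring,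
          show n+(p+m) = m+n+p from by ring,
          show n+(p+m-1) = m+n+p-1 from by ring,
          show m+n+p-1-1 = m+n+p-2 from by ring]
        simp only [E1expr, E2expr, E3expr, Finsupp.single_neg, Finsupp.single_sub,
          Finsupp.single_add, ← Finsupp.smul_single, smul_add, smul_sub, smul_neg,
          smul_smul, one_smul]
        match_scalars <;> ring
      · rw [H1, H2, H3]
        simp
    · -- case (1,0,1)
      have hab : br a b ∈ gr 1 := e10 ▸ hLb 1 0 a ha b hb
      have hbe : br b e ∈ gr 1 := e01 ▸ hLb 0 1 b hb e he
      have hea : br e a ∈ gr 0 := e11 ▸ hLb 1 1 e he a ha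
      have hcab : c a b ∈ gr 1 := e10 ▸ hNb 1 0 a ha b hb
      have hcba : c b a ∈ gr 1 := e01 ▸ hNb 0 1 b hb a ha
      have hcbe : c b e ∈ gr 1 := e01 ▸ hNb 0 1 b hb e he
      have hceb : c e b ∈ gr 1 := e10 ▸ hNb 1 0 e he b hb
      have hcea : c e a ∈ gr 0 := e11 ▸ hNb 1 1 e he a ha
      have hcae : c a e ∈ gr 0 := e11 ▸ hNb 1 1 a ha e he
      simp only [sg00, sg01, sg10, sg11]
      rw [hB3 n m a ha b hb, hB2 n p b hb e he, hB4 p m e he a ha]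
      simp only [Finsupp.single_sub, Finsupp.single_add, ← Finsupp.smul_single,
        map_add, map_sub, map_smul, LinearMap.add_apply, LinearMap.sub_apply,
        LinearMap.smul_apply]
      rw [hB4 (n+m) p (br a b) hab (α e) hαe,
        hB4 (n+m-1) p (c a b) hcab (α e) hαe,
        hB4 (n+m-1) p (c b a) hcba (α e) hαe,
        hB4 (n+p) m (br b e) hbe (α a) hαa,
        hB4 (n+p-1) m (c b e) hcbe (α a) hαa,
        hB4 (n+p-1) m (c e b) hceb (α a) hαa,
        hB1 (p+m+1) n (br e a) hea (α b) hαb,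
        hB1 (p+m) n (c e a) hcea (α b) hαb,
        hB1 (p+m) n (c a e) hcae (α b) hαb]
      have H1 : E1expr br α a b e (-1) 1 1 = 0 := by
        have h := hLjac 1 0 1 a ha b hb e he
        simp only [sg00, sg01, sg10, sg11] at h
        exact h
      have s1 := hLsk 1 1 a ha e he
      have s2 := hLsk 0 1 b hb a ha
      have s3 := hLsk 1 0 e he b hb
      simp only [sg00, sg01, sg10, sg11] at s1 s2 s3
      have l1 : c (br a e) (α b) = -(((-1):ℂ) • c (br e a) (α b)) := by
        rw [s1]; simp only [map_neg, map_smul, LinearMap.neg_apply, LinearMap.smul_apply]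
      have l2 : c (br b a) (α e) = -((1:ℂ) • c (br a b) (α e)) := by
        rw [s2]; simp only [map_neg, map_smul, LinearMap.neg_apply, LinearMap.smul_apply]
      have l3 : c (br e b) (α a) = -((1:ℂ) • c (br b e) (α a)) := by
        rw [s3]; simp only [map_neg, map_smul, LinearMap.neg_apply, LinearMap.smul_apply]
      have h1 := hC 1 0 1 a ha b hb e he
      have h2 := hC 0 1 1 b hb e he a ha
      have h3 := hC 1 1 0 e he a ha b hb
      simp only [sg00, sg01, sg10, sg11] at h1 h2 h3
      have H2 : E2expr br c α a b e (-1) 1 1 ((m:ℂ)+1/2) (n:ℂ) ((p:ℂ)+1/2) = 0 :=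
        keyH2 br c α a b e _ _ _ _ _ _ h1 h2 h3 l1 l2 l3
      have n2a := hN2 1 0 1 a ha b hb e he
      have n2b := hN2 0 1 1 b hb a ha e he
      have n2c := hN2 1 0 1 e he b hb a ha
      have n1a := hN1 1 0 1 a ha b hb e he
      have n1b := hN1 1 1 0 e he a ha b hb
      have n1c := hN1 0 1 1 b hb e he a ha
      simp only [sg00, sg01, sg10, sg11] at n2a n2b n2c n1a n1b n1c
      have H3 : E3expr c α a b e (-1) 1 1 ((m:ℂ)+1/2) (n:ℂ) ((p:ℂ)+1/2) = 0 :=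
        keyH3 c α a b e _ _ _ _ _ _ n2a n2b n2c n1a n1b n1c
      trans (Finsupp.single (m+n+p+1) (E1expr br α a b e (-1) 1 1)
        + Finsupp.single (m+n+p) (E2expr br c α a b e (-1) 1 1 ((m:ℂ)+1/2) (n:ℂ) ((p:ℂ)+1/2))
        + Finsupp.single (m+n+p-1) (E3expr c α a b e (-1) 1 1 ((m:ℂ)+1/2) (n:ℂ) ((p:ℂ)+1/2)))
      · rw [show n+m+p+1 = m+n+p+1 from by ring,
          show n+m+p = m+n+p from by ring,
          show n+m-1+p+1 = m+n+p from by ring,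
          show n+m-1+p = m+n+p-1 from by ring,
          show n+p+m+1 = m+n+p+1 from by ring,
          show n+p+m = m+n+p from by ring,
          show n+p-1+m+1 = m+n+p from by ring,
          show n+p-1+m = m+n+p-1 from by ring,
          show p+m+1+n = m+n+p+1 from by ring,
          show p+m+n = m+n+p from by ring,
          show m+n+p+1-1 = m+n+p from by ring]
        simp only [E1expr, E2expr, E3expr, Finsupp.single_neg, Finsupp.single_sub,
          Finsupp.single_add, ← Finsupp.smul_single, smul_add, smul_sub, smul_neg,
          smul_smul, one_smul]
        match_scalars <;> ring
      · rw [H1, H2, H3]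
        simp
    · -- case (1,1,0)
      have hab : br a b ∈ gr 0 := e11 ▸ hLb 1 1 a ha b hb
      have hbe : br b e ∈ gr 1 := e10 ▸ hLb 1 0 b hb e he
      have hea : br e a ∈ gr 1 := e01 ▸ hLb 0 1 e he a ha
      have hcab : c a b ∈ gr 0 := e11 ▸ hNb 1 1 a ha b hb
      have hcba : c b a ∈ gr 0 := e11 ▸ hNb 1 1 b hb a ha
      have hcbe : c b e ∈ gr 1 := e10 ▸ hNb 1 0 b hb e he
      have hceb : c e b ∈ gr 1 := e01 ▸ hNb 0 1 e he b hb
      have hcea : c e a ∈ gr 1 := e01 ▸ hNb 0 1 e he a ha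
      have hcae : c a e ∈ gr 1 := e10 ▸ hNb 1 0 a ha e he
      simp only [sg00, sg01, sg10, sg11]
      rw [hB4 m n a ha b hb, hB3 p n b hb e he, hB2 p m e he a ha]
      simp only [Finsupp.single_sub, Finsupp.single_add, ← Finsupp.smul_single,
        map_add, map_sub, map_smul, LinearMap.add_apply, LinearMap.sub_apply,
        LinearMap.smul_apply]
      rw [hB1 (m+n+1) p (br a b) hab (α e) hαe,
        hB1 (m+n) p (c a b) hcab (α e) hαe,
        hB1 (m+n) p (c b a) hcba (α e) hαe,
        hB4 (p+n) m (br b e) hbe (α a) hαa,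
        hB4 (p+n-1) m (c b e) hcbe (α a) hαa,
        hB4 (p+n-1) m (c e b) hceb (α a) hαa,
        hB4 (p+m) n (br e a) hea (α b) hαb,
        hB4 (p+m-1) n (c e a) hcea (α b) hαb,
        hB4 (p+m-1) n (c a e) hcae (α b) hαb]
      have H1 : E1expr br α a b e 1 (-1) 1 = 0 := by
        have h := hLjac 1 1 0 a ha b hb e he
        simp only [sg00, sg01, sg10, sg11] at h
        exact h
      have s1 := hLsk 1 0 a ha e he
      have s2 := hLsk 1 1 b hb a ha
      have s3 := hLsk 0 1 e he b hb
      simp only [sg00, sg01, sg10, sg11] at s1 s2 s3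
      have l1 : c (br a e) (α b) = -((1:ℂ) • c (br e a) (α b)) := by
        rw [s1]; simp only [map_neg, map_smul, LinearMap.neg_apply, LinearMap.smul_apply]
      have l2 : c (br b a) (α e) = -(((-1):ℂ) • c (br a b) (α e)) := by
        rw [s2]; simp only [map_neg, map_smul, LinearMap.neg_apply, LinearMap.smul_apply]
      have l3 : c (br e b) (α a) = -((1:ℂ) • c (br b e) (α a)) := by
        rw [s3]; simp only [map_neg, map_smul, LinearMap.neg_apply, LinearMap.smul_apply]
      have h1 := hC 1 1 0 a ha b hb e he
      have h2 := hC 1 0 1 b hb e he a ha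
      have h3 := hC 0 1 1 e he a ha b hb
      simp only [sg00, sg01, sg10, sg11] at h1 h2 h3
      have H2 : E2expr br c α a b e 1 (-1) 1 ((m:ℂ)+1/2) ((n:ℂ)+1/2) (p:ℂ) = 0 :=
        keyH2 br c α a b e _ _ _ _ _ _ h1 h2 h3 l1 l2 l3
      have n2a := hN2 1 1 0 a ha b hb e he
      have n2b := hN2 1 1 0 b hb a ha e he
      have n2c := hN2 0 1 1 e he b hb a ha
      have n1a := hN1 1 1 0 a ha b hb e he
      have n1b := hN1 0 1 1 e he a ha b hb
      have n1c := hN1 1 0 1 b hb e he a ha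
      simp only [sg00, sg01, sg10, sg11] at n2a n2b n2c n1a n1b n1c
      have H3 : E3expr c α a b e 1 (-1) 1 ((m:ℂ)+1/2) ((n:ℂ)+1/2) (p:ℂ) = 0 :=
        keyH3 c α a b e _ _ _ _ _ _ n2a n2b n2c n1a n1b n1c
      trans (Finsupp.single (m+n+p+1) (E1expr br α a b e 1 (-1) 1)
        + Finsupp.single (m+n+p) (E2expr br c α a b e 1 (-1) 1 ((m:ℂ)+1/2) ((n:ℂ)+1/2) (p:ℂ))
        + Finsupp.single (m+n+p-1) (E3expr c α a b e 1 (-1) 1 ((m:ℂ)+1/2) ((n:ℂ)+1/2) (p:ℂ)))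
      · rw [show m+n+1+p = m+n+p+1 from by ring,
          show p+n+m+1 = m+n+p+1 from by ring,
          show p+n+m = m+n+p from by ring,
          show p+n-1+m+1 = m+n+p from by ring,
          show p+n-1+m = m+n+p-1 from by ring,
          show p+m+n+1 = m+n+p+1 from by ring,
          show p+m+n = m+n+p from by ring,
          show p+m-1+n+1 = m+n+p from by ring,
          show p+m-1+n = m+n+p-1 from by ring,
          show m+n+p+1-1 = m+n+p from by ring]
        simp only [E1expr, E2expr, E3expr, Finsupp.single_neg, Finsupp.single_sub,
          Finsupp.single_add, ← Finsupp.smul_single, smul_add, smul_sub, smul_neg,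
          smul_smul, one_smul]
        match_scalars <;> ring
      · rw [H1, H2, H3]
        simp
    · -- case (1,1,1)
      have hab : br a b ∈ gr 0 := e11 ▸ hLb 1 1 a ha b hb
      have hbe : br b e ∈ gr 0 := e11 ▸ hLb 1 1 b hb e he
      have hea : br e a ∈ gr 0 := e11 ▸ hLb 1 1 e he a ha
      have hcab : c a b ∈ gr 0 := e11 ▸ hNb 1 1 a ha b hb
      have hcba : c b a ∈ gr 0 := e11 ▸ hNb 1 1 b hb a ha
      have hcbe : c b e ∈ gr 0 := e11 ▸ hNb 1 1 b hb e he
      have hceb : c e b ∈ gr 0 := e11 ▸ hNb 1 1 e he b hb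
      have hcea : c e a ∈ gr 0 := e11 ▸ hNb 1 1 e he a ha
      have hcae : c a e ∈ gr 0 := e11 ▸ hNb 1 1 a ha e he
      simp only [sg00, sg01, sg10, sg11]
      rw [hB4 m n a ha b hb, hB4 n p b hb e he, hB4 p m e he a ha]
      simp only [Finsupp.single_sub, Finsupp.single_add, ← Finsupp.smul_single,
        map_add, map_sub, map_smul, LinearMap.add_apply, LinearMap.sub_apply,
        LinearMap.smul_apply]
      rw [hB2 (m+n+1) p (br a b) hab (α e) hαe,
        hB2 (m+n) p (c a b) hcab (α e) hαe,
        hB2 (m+n) p (c b a) hcba (α e) hαe,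
        hB2 (n+p+1) m (br b e) hbe (α a) hαa,
        hB2 (n+p) m (c b e) hcbe (α a) hαa,
        hB2 (n+p) m (c e b) hceb (α a) hαa,
        hB2 (p+m+1) n (br e a) hea (α b) hαb,
        hB2 (p+m) n (c e a) hcea (α b) hαb,
        hB2 (p+m) n (c a e) hcae (α b) hαb]
      have H1 : E1expr br α a b e (-1) (-1) (-1) = 0 := by
        have h := hLjac 1 1 1 a ha b hb e he
        simp only [sg00, sg01, sg10, sg11] at h
        exact h
      have s1 := hLsk 1 1 a ha e he
      have s2 := hLsk 1 1 b hb a ha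
      have s3 := hLsk 1 1 e he b hb
      simp only [sg00, sg01, sg10, sg11] at s1 s2 s3
      have l1 : c (br a e) (α b) = -(((-1):ℂ) • c (br e a) (α b)) := by
        rw [s1]; simp only [map_neg, map_smul, LinearMap.neg_apply, LinearMap.smul_apply]
      have l2 : c (br b a) (α e) = -(((-1):ℂ) • c (br a b) (α e)) := by
        rw [s2]; simp only [map_neg, map_smul, LinearMap.neg_apply, LinearMap.smul_apply]
      have l3 : c (br e b) (α a) = -(((-1):ℂ) • c (br b e) (α a)) := by
        rw [s3]; simp only [map_neg, map_smul, LinearMap.neg_apply, LinearMap.smul_apply]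
      have h1 := hC 1 1 1 a ha b hb e he
      have h2 := hC 1 1 1 b hb e he a ha
      have h3 := hC 1 1 1 e he a ha b hb
      simp only [sg00, sg01, sg10, sg11] at h1 h2 h3
      have H2 : E2expr br c α a b e (-1) (-1) (-1) ((m:ℂ)+1/2) ((n:ℂ)+1/2) ((p:ℂ)+1/2) = 0 :=
        keyH2 br c α a b e _ _ _ _ _ _ h1 h2 h3 l1 l2 l3
      have n2a := hN2 1 1 1 a ha b hb e he
      have n2b := hN2 1 1 1 b hb a ha e he
      have n2c := hN2 1 1 1 e he b hb a ha
      have n1a := hN1 1 1 1 a ha b hb e he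
      have n1b := hN1 1 1 1 e he a ha b hb
      have n1c := hN1 1 1 1 b hb e he a ha
      simp only [sg00, sg01, sg10, sg11] at n2a n2b n2c n1a n1b n1c
      have H3 : E3expr c α a b e (-1) (-1) (-1) ((m:ℂ)+1/2) ((n:ℂ)+1/2) ((p:ℂ)+1/2) = 0 :=
        keyH3 c α a b e _ _ _ _ _ _ n2a n2b n2c n1a n1b n1c
      trans (Finsupp.single (m+n+p+1) (E1expr br α a b e (-1) (-1) (-1))
        + Finsupp.single (m+n+p) (E2expr br c α a b e (-1) (-1) (-1) ((m:ℂ)+1/2) ((n:ℂ)+1/2) ((p:ℂ)+1/2))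
        + Finsupp.single (m+n+p-1) (E3expr c α a b e (-1) (-1) (-1) ((m:ℂ)+1/2) ((n:ℂ)+1/2) ((p:ℂ)+1/2)))
      · rw [show m+n+1+p = m+n+p+1 from by ring,
          show n+p+1+m = m+n+p+1 from by ring,
          show n+p+m = m+n+p from by ring,
          show p+m+1+n = m+n+p+1 from by ring,
          show p+m+n = m+n+p from by ring,
          show m+n+p+1-1 = m+n+p from by ring]
        simp only [E1expr, E2expr, E3expr, Finsupp.single_neg, Finsupp.single_sub,
          Finsupp.single_add, ← Finsupp.smul_single, smul_add, smul_sub, smul_neg,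
          smul_smul, one_smul]
        match_scalars <;> ring
      · rw [H1, H2, H3]
        simp

end
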